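/- Every linearly stratifiable space (i.e., every space stratifiable over some ordinal α ≥ ω) is a D-space. -/

import Mathlib

open Set TopologicalSpace

/-- `X` is a D-space: for every open neighborhood assignment `N` there is a
closed discrete subset `D` with `⋃ d ∈ D, N d = univ`. -/
def IsDSpace (X : Type*) [TopologicalSpace X] : Prop :=
  ∀ N : X → Set X, (∀ x, IsOpen (N x)) → (∀ x, x ∈ N x) →
    ∃ D : Set X, IsClosed D ∧ DiscreteTopology D ∧ (⋃ d ∈ D, N d) = Set.univ

/-- `X` is stratifiable over the ordinal `α`: there is a map `G` assigning to each
`β < α` and each open `U` an open set `G β U` such that `closure (G β U) ⊆ U`,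
the sets `G β U` for `β < α` cover `U`, `G` is monotone in `U`, and increasing in `β`. -/
def StratifiableOver (X : Type*) [TopologicalSpace X] (α : Ordinal) : Prop :=
  ∃ G : Ordinal → Set X → Set X,
    (∀ β < α, ∀ U : Set X, IsOpen U → IsOpen (G β U)) ∧
    (∀ β < α, ∀ U : Set X, IsOpen U → closure (G β U) ⊆ U) ∧
    (∀ U : Set X, IsOpen U → (⋃ β ∈ Set.Iio α, G β U) = U) ∧
    (∀ U V : Set X, IsOpen U → IsOpen V → U ⊆ V → ∀ β < α, G β U ⊆ G β V) ∧
    (∀ U : Set X, IsOpen U → ∀ γ β : Ordinal, γ < β → β < α → G γ U ⊆ G β U)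

/-- The greedy selection along a well-founded relation: `x` is selected iff it is
not in `N y` for any previously selected `y`. -/
def greedySel {X : Type*} (rel : X → X → Prop) (hwf : WellFounded rel)
    (N : X → Set X) : X → Prop :=
  hwf.fix (fun x ih => ∀ y, ∀ h : rel y x, ih y h → x ∉ N y)

theorem greedySel_iff {X : Type*} (rel : X → X → Prop) (hwf : WellFounded rel)
    (N : X → Set X) (x : X) :
    greedySel rel hwf N x ↔ ∀ y, rel y x → greedySel rel hwf N y → x ∉ N y := by
  have h := hwf.fix_eq (fun x (ih : ∀ y, rel y x → Prop) =>
    ∀ y, ∀ h : rel y x, ih y h → x ∉ N y) x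
  exact h ▸ Iff.rfl

/-- Every linearly stratifiable space (a T1 space stratifiable over some ordinal
`α ≥ ω`) is a D-space. -/
theorem linearlyStratifiable_isDSpace (X : Type*) [TopologicalSpace X] [T1Space X]
    (h : ∃ α : Ordinal, Ordinal.omega0 ≤ α ∧ StratifiableOver X α) : IsDSpace X := by
  obtain ⟨α, -, G, hGopen, hGcl, hGcover, hGmono, hGincr⟩ := h
  intro N hNopen hNmem
  -- rank function
  have hrank : ∀ x : X, ∃ β, β < α ∧ x ∈ G β (N x) := by
    intro x
    have hx : x ∈ ⋃ β ∈ Set.Iio α, G β (N x) := by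
      rw [hGcover (N x) (hNopen x)]; exact hNmem x
    simpa using hx
  set r : X → Ordinal := fun x => (hrank x).choose with hr_def
  have hr : ∀ x, r x < α ∧ x ∈ G (r x) (N x) := fun x => (hrank x).choose_spec
  -- the well-founded relation: rank first, then an arbitrary well-order
  set rel : X → X → Prop :=
    fun x y => Prod.Lex ((· < ·) : Ordinal → Ordinal → Prop) WellOrderingRel (r x, x) (r y, y)
    with hrel_def
  have hwf : WellFounded rel := by
    have h1 : WellFounded (Prod.Lex ((· < ·) : Ordinal → Ordinal → Prop)
        (WellOrderingRel (α := X))) :=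
      WellFounded.prod_lex Ordinal.lt_wf WellOrderingRel.isWellOrder.wf
    exact InvImage.wf (fun x => (r x, x)) h1
  have hrel_le : ∀ {x y : X}, rel x y → r x ≤ r y := by
    intro x y hxy
    rcases Prod.lex_def.mp hxy with h | ⟨h, -⟩
    · exact le_of_lt h
    · exact le_of_eq h
  have htri : ∀ x y : X, x ≠ y → rel x y ∨ rel y x := by
    intro x y hxy
    rcases lt_trichotomy (r x) (r y) with h | h | h
    · exact Or.inl (Prod.Lex.left _ _ h)
    · rcases trichotomous_of (r := WellOrderingRel) x y with h' | h' | h'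
      · exact Or.inl (Prod.lex_def.mpr (Or.inr ⟨h, h'⟩))
      · exact absurd h' hxy
      · exact Or.inr (Prod.lex_def.mpr (Or.inr ⟨h.symm, h'⟩))
    · exact Or.inr (Prod.Lex.left _ _ h)
  -- the closed discrete set
  set D : Set X := {x | greedySel rel hwf N x} with hD_def
  have hGreedy : ∀ x : X, x ∈ D ↔ ∀ y, rel y x → y ∈ D → x ∉ N y :=
    fun x => greedySel_iff rel hwf N x
  -- coverage
  have hcov : ∀ z : X, ∃ d ∈ D, z ∈ N d := by
    intro z
    by_contra hc
    push_neg at hc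
    have hz : z ∈ D := (hGreedy z).mpr (fun y _ hyD => hc y hyD)
    exact hc z hz (hNmem z)
  -- main separation claim
  have hmaster : ∀ z : X, ∃ V : Set X, IsOpen V ∧ z ∈ V ∧ V ∩ D ⊆ {z} := by
    intro z
    set S : Set X := {d | d ∈ D ∧ z ∈ N d} with hS_def
    have hSne : S.Nonempty := by
      obtain ⟨d, hd, hz⟩ := hcov z
      exact ⟨d, hd, hz⟩
    set d : X := hwf.min S hSne with hd_def
    have hdS : d ∈ S := hwf.min_mem S hSne
    have hmin : ∀ e ∈ S, ¬ rel e d := fun e he => hwf.not_lt_min S he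
    set E : Set X := {e | e ∈ D ∧ rel e d} with hE_def
    set W : Set X := ⋃ e ∈ E, N e with hW_def
    have hWopen : IsOpen W := isOpen_biUnion (fun e _ => hNopen e)
    have hzW : z ∉ W := by
      rw [hW_def]
      simp only [mem_iUnion, exists_prop, not_exists, not_and]
      rintro e ⟨heD, herel⟩ hze
      exact hmin e ⟨heD, hze⟩ herel
    have hEsub : E ⊆ G (r d) W := by
      rintro e ⟨heD, herel⟩
      have h1 : e ∈ G (r e) (N e) := (hr e).2
      have hNeW : N e ⊆ W := by
        rw [hW_def]
        exact subset_biUnion_of_mem (u := fun e => N e) ⟨heD, herel⟩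
      have h2 : G (r e) (N e) ⊆ G (r e) W :=
        hGmono (N e) W (hNopen e) hWopen hNeW (r e) (hr e).1
      have h3 : G (r e) W ⊆ G (r d) W := by
        rcases lt_or_eq_of_le (hrel_le herel) with h | h
        · exact hGincr W hWopen (r e) (r d) h (hr d).1
        · rw [h]
      exact h3 (h2 h1)
    have hclE : closure E ⊆ W :=
      (closure_mono hEsub).trans (hGcl (r d) (hr d).1 W hWopen)
    have hzclE : z ∉ closure E := fun h => hzW (hclE h)
    have hND : N d ∩ D ⊆ insert d E := by
      rintro x ⟨hxN, hxD⟩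
      by_cases hxd : x = d
      · exact Or.inl hxd
      · rcases htri x d hxd with h | h
        · exact Or.inr ⟨hxD, h⟩
        · exact absurd hxN ((hGreedy x).mp hxD d h hdS.1)
    by_cases hzd : z = d
    · refine ⟨N d \ closure E, (hNopen d).sdiff isClosed_closure, ⟨hdS.2, hzclE⟩, ?_⟩
      rintro x ⟨⟨hxN, hxcl⟩, hxD⟩
      rcases hND ⟨hxN, hxD⟩ with h | h
      · rw [h, hzd]; rfl
      · exact absurd (subset_closure h) hxcl
    · refine ⟨(N d \ closure E) \ {d},
        ((hNopen d).sdiff isClosed_closure).sdiff isClosed_singleton,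
        ⟨⟨hdS.2, hzclE⟩, hzd⟩, ?_⟩
      rintro x ⟨⟨⟨hxN, hxcl⟩, hxd⟩, hxD⟩
      rcases hND ⟨hxN, hxD⟩ with h | h
      · exact absurd h hxd
      · exact absurd (subset_closure h) hxcl
  refine ⟨D, ?_, ?_, ?_⟩
  · -- closed
    rw [← isOpen_compl_iff]
    rw [isOpen_iff_forall_mem_open]
    intro z hz
    obtain ⟨V, hVopen, hzV, hVD⟩ := hmaster z
    refine ⟨V, ?_, hVopen, hzV⟩
    intro x hx hxD
    exact hz (by rwa [← show x = z from hVD ⟨hx, hxD⟩] )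
  · -- discrete
    rw [discreteTopology_iff_isOpen_singleton]
    rintro ⟨x, hx⟩
    obtain ⟨V, hVopen, hzV, hVD⟩ := hmaster x
    rw [isOpen_induced_iff]
    refine ⟨V, hVopen, ?_⟩
    ext ⟨y, hy⟩
    simp only [mem_preimage, mem_singleton_iff, Subtype.mk_eq_mk]
    constructor
    · intro hyV
      exact hVD ⟨hyV, hy⟩
    · rintro rfl
      exact hzV
  · -- coverage
    rw [eq_univ_iff_forall]
    intro z
    obtain ⟨d, hd, hz⟩ := hcov z
    exact mem_biUnion hd hz
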